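/- (Minkowski–Weyl, constraint direction) Every nonempty closed convex polyhedron P ⊆ ℝⁿ (finite intersection of closed half-spaces) admits finite sets R, P₀ ⊆ ℝⁿ with 0 ∉ R such that P = { Rρ + P₀π | ρ ≥ 0, π ≥ 0, Σπᵢ = 1 }. -/

import Mathlib

open Finset

section Cone
variable {d : ℕ} {ι : Type} [Fintype ι]

def dotp {d : ℕ} (a y : Fin d → ℝ) : ℝ := ∑ j, a j * y j

def coneOf {d : ℕ} {ι : Type} [Fintype ι] (v : ι → Fin d → ℝ) : Set (Fin d → ℝ) :=
  {x | ∃ lam : ι → ℝ, (∀ i, 0 ≤ lam i) ∧ x = ∑ i, lam i • v i}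

lemma dotp_sum {ι : Type} [Fintype ι] (a : Fin d → ℝ) (f : ι → Fin d → ℝ) :
    dotp a (∑ i, f i) = ∑ i, dotp a (f i) := by
  unfold dotp
  rw [Finset.sum_comm]
  congr 1; funext j
  rw [Finset.sum_apply, Finset.mul_sum]

lemma dotp_smul (a : Fin d → ℝ) (c : ℝ) (y : Fin d → ℝ) :
    dotp a (c • y) = c * dotp a y := by
  unfold dotp
  rw [Finset.mul_sum]
  congr 1; funext j; simp; ring

lemma dotp_add (a : Fin d → ℝ) (x y : Fin d → ℝ) :
    dotp a (x + y) = dotp a x + dotp a y := by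
  unfold dotp
  rw [← Finset.sum_add_distrib]
  congr 1; funext j; simp; ring

lemma dotp_zero (a : Fin d → ℝ) : dotp a (0 : Fin d → ℝ) = 0 := by
  simp [dotp]

lemma mem_coneOf_self (v : ι → Fin d → ℝ) (i : ι) : v i ∈ coneOf v := by
  classical
  refine ⟨fun j => if j = i then 1 else 0, fun j => by dsimp only; split <;> norm_num, ?_⟩
  simp [ite_smul]

lemma zero_mem_coneOf (v : ι → Fin d → ℝ) : (0 : Fin d → ℝ) ∈ coneOf v :=
  ⟨0, fun _ => le_refl _, by simp⟩

lemma add_mem_coneOf {v : ι → Fin d → ℝ} {x y : Fin d → ℝ}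
    (hx : x ∈ coneOf v) (hy : y ∈ coneOf v) : x + y ∈ coneOf v := by
  obtain ⟨l1, h1, e1⟩ := hx; obtain ⟨l2, h2, e2⟩ := hy
  exact ⟨l1 + l2, fun i => add_nonneg (h1 i) (h2 i),
    by simp [e1, e2, add_smul, Finset.sum_add_distrib]⟩

lemma smul_mem_coneOf {v : ι → Fin d → ℝ} {x : Fin d → ℝ} {c : ℝ}
    (hc : 0 ≤ c) (hx : x ∈ coneOf v) : c • x ∈ coneOf v := by
  obtain ⟨l, hl, e⟩ := hx
  refine ⟨fun i => c * l i, fun i => mul_nonneg hc (hl i), ?_⟩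
  rw [e, Finset.smul_sum]
  simp [smul_smul]

lemma sum_smul_mem_coneOf {κ : Type} [Fintype κ] {v : ι → Fin d → ℝ}
    {c : κ → ℝ} {f : κ → Fin d → ℝ} (hc : ∀ i, 0 ≤ c i)
    (hf : ∀ i, f i ∈ coneOf v) : (∑ i, c i • f i) ∈ coneOf v := by
  classical
  refine Finset.sum_induction _ _ (fun a b ha hb => add_mem_coneOf ha hb)
    (zero_mem_coneOf v) (fun i _ => smul_mem_coneOf (hc i) (hf i))

lemma coneOf_reindex {ι' : Type} [Fintype ι'] (v : ι → Fin d → ℝ) (e : ι' ≃ ι) :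
    coneOf (v ∘ e) = coneOf v := by
  ext x
  constructor
  · rintro ⟨l, hl, rfl⟩
    refine ⟨l ∘ e.symm, fun i => hl _, ?_⟩
    rw [← Equiv.sum_comp e (fun i => (l ∘ e.symm) i • v i)]
    simp
  · rintro ⟨l, hl, rfl⟩
    refine ⟨l ∘ e, fun i => hl _, ?_⟩
    rw [← Equiv.sum_comp e (fun i => l i • v i)]
    simp

lemma coneOf_toFin (v : ι → Fin d → ℝ) :
    ∃ (k : ℕ) (w : Fin k → Fin d → ℝ), coneOf v = coneOf w :=
  ⟨Fintype.card ι, v ∘ (Fintype.equivFin ι).symm,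
    (coneOf_reindex v (Fintype.equivFin ι).symm).symm⟩

end Cone

section DD

variable {d k : ℕ} (v : Fin k → Fin d → ℝ) (a : Fin d → ℝ)

/-- Double-description generators for `coneOf v ∩ {y | 0 ≤ ⟨a, y⟩}`. -/
noncomputable def ddGen : Fin k ⊕ Fin k × Fin k → Fin d → ℝ :=
  Sum.elim (fun i => if 0 ≤ dotp a (v i) then v i else 0)
    (fun p => if 0 < dotp a (v p.1) ∧ dotp a (v p.2) < 0 then
        dotp a (v p.1) • v p.2 + (-dotp a (v p.2)) • v p.1 else 0)

lemma ddGen_mem (s : Fin k ⊕ Fin k × Fin k) : ddGen v a s ∈ coneOf v := by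
  rcases s with i | ⟨i, j⟩
  · simp only [ddGen, Sum.elim_inl]
    split
    · exact mem_coneOf_self v i
    · exact zero_mem_coneOf v
  · simp only [ddGen, Sum.elim_inr]
    split
    · next h =>
      exact add_mem_coneOf (smul_mem_coneOf h.1.le (mem_coneOf_self v j))
        (smul_mem_coneOf (by linarith [h.2]) (mem_coneOf_self v i))
    · exact zero_mem_coneOf v

lemma ddGen_dotp_nonneg (s : Fin k ⊕ Fin k × Fin k) : 0 ≤ dotp a (ddGen v a s) := by
  rcases s with i | ⟨i, j⟩
  · simp only [ddGen, Sum.elim_inl]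
    split
    · assumption
    · simp [dotp_zero]
  · simp only [ddGen, Sum.elim_inr]
    split
    · rw [dotp_add, dotp_smul, dotp_smul]; ring_nf; exact le_refl _
    · simp [dotp_zero]

/-- Terminal case: all generators with nonzero coefficient have nonnegative dot product. -/
lemma dd_terminal (lam : Fin k → ℝ) (hnn : ∀ i, 0 ≤ lam i)
    (hterm : ∀ i, lam i ≠ 0 → 0 ≤ dotp a (v i)) :
    (∑ i, lam i • v i) ∈ coneOf (ddGen v a) := by
  classical
  refine ⟨Sum.elim (fun i => if 0 ≤ dotp a (v i) then lam i else 0) 0, ?_, ?_⟩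
  · rintro (i | p)
    · dsimp only [Sum.elim_inl]; split
      · exact hnn i
      · exact le_refl _
    · exact le_refl _
  · rw [Fintype.sum_sum_type]
    have h2 : ∑ p : Fin k × Fin k,
        (Sum.elim (fun i => if 0 ≤ dotp a (v i) then lam i else 0) 0
          (Sum.inr p) : ℝ) • ddGen v a (Sum.inr p) = 0 := by
      apply Finset.sum_eq_zero; intro p _; simp
    rw [h2, add_zero]
    apply Finset.sum_congr rfl
    intro i _
    simp only [Sum.elim_inl, ddGen]
    by_cases h : 0 ≤ dotp a (v i)
    · simp [h]
    · have : lam i = 0 := by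
        by_contra hne; exact h (hterm i hne)
      simp [h, this]

lemma dd_key : ∀ (N : ℕ) (lam : Fin k → ℝ),
    ((univ.filter (fun i => lam i ≠ 0 ∧ 0 < dotp a (v i))).card
      + (univ.filter (fun i => lam i ≠ 0 ∧ dotp a (v i) < 0)).card ≤ N) →
    (∀ i, 0 ≤ lam i) → 0 ≤ dotp a (∑ i, lam i • v i) →
    (∑ i, lam i • v i) ∈ coneOf (ddGen v a) := by
  classical
  intro N
  induction N with
  | zero =>
    intro lam hcard hnn _
    apply dd_terminal v a lam hnn
    intro i hi
    by_contra hneg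
    push_neg at hneg
    have hmem : i ∈ univ.filter (fun i => lam i ≠ 0 ∧ dotp a (v i) < 0) := by
      simp [hi, hneg]
    have := Finset.card_pos.mpr ⟨i, hmem⟩
    omega
  | succ N IH =>
    intro lam hcard hnn hdot
    by_cases hneg : ∃ h, lam h ≠ 0 ∧ dotp a (v h) < 0
    case neg =>
      push_neg at hneg
      exact dd_terminal v a lam hnn hneg
    obtain ⟨h, hh1, hh2⟩ := hneg
    have hlamh : 0 < lam h := lt_of_le_of_ne (hnn h) (Ne.symm hh1)
    have hdot' : 0 ≤ ∑ i, lam i * dotp a (v i) := by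
      calc (0:ℝ) ≤ dotp a (∑ i, lam i • v i) := hdot
        _ = ∑ i, lam i * dotp a (v i) := by
            rw [dotp_sum]; exact Finset.sum_congr rfl fun i _ => dotp_smul a _ _
    have hex : ∃ g, 0 < lam g * dotp a (v g) := by
      by_contra hc
      push_neg at hc
      have hlt : ∑ i, lam i * dotp a (v i) < ∑ _i : Fin k, (0:ℝ) := by
        apply Finset.sum_lt_sum (fun i _ => hc i)
        exact ⟨h, Finset.mem_univ h, by nlinarith⟩
      simp only [Finset.sum_const_zero] at hlt
      linarith
    obtain ⟨g, hg⟩ := hex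
    have hlamg : 0 < lam g := by
      rcases lt_trichotomy (lam g) 0 with h' | h' | h'
      · linarith [hnn g]
      · rw [h'] at hg; simp at hg
      · exact h'
    have hA : 0 < dotp a (v g) := by nlinarith
    have hgh : g ≠ h := by
      intro e; rw [e] at hA; linarith
    set A := dotp a (v g) with hAdef
    set B := dotp a (v h) with hBdef
    have hB : B < 0 := hh2
    have hAne : A ≠ 0 := ne_of_gt hA
    have hBne : B ≠ 0 := ne_of_lt hB
    set μ := min (lam h) (lam g * A / (-B)) with hμdef
    have hμ0 : 0 ≤ μ := le_min hlamh.le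
      (div_nonneg (by positivity) (by linarith))
    have hμh : μ ≤ lam h := min_le_left _ _
    have hμg : μ * (-B) ≤ lam g * A :=
      (le_div_iff₀ (by linarith : (0:ℝ) < -B)).mp (min_le_right _ _)
    set lam' : Fin k → ℝ := fun i =>
      if i = g then lam g + μ * B / A else if i = h then lam h - μ else lam i with hlam'
    have hlam'g : lam' g = lam g + μ * B / A := by simp [hlam']
    have hlam'h : lam' h = lam h - μ := by simp [hlam', Ne.symm hgh]
    have hlam'other : ∀ i, i ≠ g → i ≠ h → lam' i = lam i := by
      intro i h1 h2; simp [hlam', h1, h2]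
    set wgh := ddGen v a (Sum.inr (g, h)) with hwghdef
    have hwgh : wgh = A • v h + (-B) • v g := by
      simp only [hwghdef, ddGen, Sum.elim_inr]
      rw [if_pos ⟨hA, hB⟩]
    have hmemh : h ∈ univ.erase g := Finset.mem_erase.mpr ⟨Ne.symm hgh, Finset.mem_univ h⟩
    have hsplit : ∀ (f : Fin k → Fin d → ℝ),
        ∑ i, f i = f g + f h + ∑ i ∈ (univ.erase g).erase h, f i := by
      intro f
      rw [← Finset.sum_erase_add univ f (Finset.mem_univ g),
        ← Finset.sum_erase_add (univ.erase g) f hmemh]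
      abel
    have claim1 : ∑ i, lam i • v i = ∑ i, lam' i • v i + (μ / A) • wgh := by
      rw [hsplit (fun i => lam i • v i), hsplit (fun i => lam' i • v i)]
      have e1 : ∑ i ∈ (univ.erase g).erase h, lam' i • v i
          = ∑ i ∈ (univ.erase g).erase h, lam i • v i := by
        apply Finset.sum_congr rfl
        intro i hi
        rw [Finset.mem_erase, Finset.mem_erase] at hi
        rw [hlam'other i hi.2.1 hi.1]
      rw [e1, hwgh, hlam'g, hlam'h]
      match_scalars <;> field_simp <;> ring
    have hnn' : ∀ i, 0 ≤ lam' i := by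
      intro i
      rcases eq_or_ne i g with hig | hig
      · rw [hig, hlam'g]
        have e : lam g + μ * B / A = (lam g * A + μ * B) / A := by field_simp
        rw [e]
        apply div_nonneg _ hA.le
        nlinarith
      rcases eq_or_ne i h with hih | hih
      · rw [hih, hlam'h]; linarith
      · rw [hlam'other i hig hih]; exact hnn i
    have hdotwgh : dotp a wgh = 0 := by
      rw [hwgh, dotp_add, dotp_smul, dotp_smul, ← hAdef, ← hBdef]; ring
    have hdot2 : 0 ≤ dotp a (∑ i, lam' i • v i) := by
      have := hdot
      rw [claim1, dotp_add, dotp_smul, hdotwgh, mul_zero, add_zero] at this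
      exact this
    have hsub1 : univ.filter (fun i => lam' i ≠ 0 ∧ 0 < dotp a (v i))
        ⊆ univ.filter (fun i => lam i ≠ 0 ∧ 0 < dotp a (v i)) := by
      intro i hi
      simp only [Finset.mem_filter, Finset.mem_univ, true_and] at hi ⊢
      rcases eq_or_ne i g with hig | hig
      · rw [hig]; exact ⟨ne_of_gt hlamg, hig ▸ hi.2⟩
      rcases eq_or_ne i h with hih | hih
      · exfalso; rw [hih] at hi; rw [← hBdef] at hi; linarith [hi.2]
      · rw [hlam'other i hig hih] at hi; exact hi
    have hsub2 : univ.filter (fun i => lam' i ≠ 0 ∧ dotp a (v i) < 0)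
        ⊆ univ.filter (fun i => lam i ≠ 0 ∧ dotp a (v i) < 0) := by
      intro i hi
      simp only [Finset.mem_filter, Finset.mem_univ, true_and] at hi ⊢
      rcases eq_or_ne i g with hig | hig
      · exfalso; rw [hig] at hi; rw [← hAdef] at hi; linarith [hi.2]
      rcases eq_or_ne i h with hih | hih
      · rw [hih]; exact ⟨ne_of_gt hlamh, hih ▸ hi.2⟩
      · rw [hlam'other i hig hih] at hi; exact hi
    have hcard' : (univ.filter (fun i => lam' i ≠ 0 ∧ 0 < dotp a (v i))).card
        + (univ.filter (fun i => lam' i ≠ 0 ∧ dotp a (v i) < 0)).card ≤ N := by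
      by_cases hcase : μ = lam h
      · have hnotin : h ∉ univ.filter (fun i => lam' i ≠ 0 ∧ dotp a (v i) < 0) := by
          simp only [Finset.mem_filter, Finset.mem_univ, true_and, not_and]
          intro hc; exfalso; apply hc; rw [hlam'h, hcase]; ring
        have hin : h ∈ univ.filter (fun i => lam i ≠ 0 ∧ dotp a (v i) < 0) := by
          simp only [Finset.mem_filter, Finset.mem_univ, true_and]
          exact ⟨hh1, hh2⟩
        have hlt := Finset.card_lt_card
          ((Finset.ssubset_iff_of_subset hsub2).mpr ⟨h, hin, hnotin⟩)
        have hle := Finset.card_le_card hsub1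
        omega
      · have hμval : μ = lam g * A / (-B) := by
          rcases min_choice (lam h) (lam g * A / (-B)) with h' | h'
          · exact absurd (hμdef.trans h') hcase
          · exact hμdef.trans h'
        have hlg' : lam' g = 0 := by
          rw [hlam'g, hμval]; field_simp; ring
        have hnotin : g ∉ univ.filter (fun i => lam' i ≠ 0 ∧ 0 < dotp a (v i)) := by
          simp only [Finset.mem_filter, Finset.mem_univ, true_and, not_and]
          intro hc; exact absurd hlg' hc
        have hin : g ∈ univ.filter (fun i => lam i ≠ 0 ∧ 0 < dotp a (v i)) := by
          simp only [Finset.mem_filter, Finset.mem_univ, true_and]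
          exact ⟨ne_of_gt hlamg, hA⟩
        have hlt := Finset.card_lt_card
          ((Finset.ssubset_iff_of_subset hsub1).mpr ⟨g, hin, hnotin⟩)
        have hle := Finset.card_le_card hsub2
        omega
    rw [claim1]
    exact add_mem_coneOf (IH lam' hcard' hnn' hdot2)
      (smul_mem_coneOf (div_nonneg hμ0 hA.le) (mem_coneOf_self _ (Sum.inr (g, h))))

lemma dd_step : ∃ (k' : ℕ) (w : Fin k' → Fin d → ℝ),
    coneOf v ∩ {y | 0 ≤ dotp a y} = coneOf w := by
  obtain ⟨k', w, hw⟩ := coneOf_toFin (ddGen v a)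
  refine ⟨k', w, ?_⟩
  rw [← hw]
  ext y; constructor
  · rintro ⟨⟨lam, hnn, rfl⟩, hdot⟩
    exact dd_key v a _ lam le_rfl hnn hdot
  · rintro ⟨mu, hmu, rfl⟩
    constructor
    · exact sum_smul_mem_coneOf hmu (ddGen_mem v a)
    · show 0 ≤ dotp a _
      rw [dotp_sum]
      apply Finset.sum_nonneg
      intro s _
      rw [dotp_smul]
      exact mul_nonneg (hmu s) (ddGen_dotp_nonneg v a s)

end DD

theorem cone_fg (m : ℕ) {d : ℕ} (a : Fin m → Fin d → ℝ) :
    ∃ (k : ℕ) (v : Fin k → Fin d → ℝ), {y | ∀ i, 0 ≤ dotp (a i) y} = coneOf v := by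
  induction m with
  | zero =>
    obtain ⟨k, w, hw⟩ := coneOf_toFin (d := d)
      (Sum.elim (fun j : Fin d => Pi.single j (1:ℝ)) (fun j : Fin d => Pi.single j (-1:ℝ)))
    refine ⟨k, w, ?_⟩
    rw [← hw]
    ext y
    constructor
    · intro _
      refine ⟨Sum.elim (fun j => max (y j) 0) (fun j => max (-(y j)) 0), ?_, ?_⟩
      · rintro (j | j) <;> simp [le_max_right]
      · rw [Fintype.sum_sum_type]
        funext c
        simp only [Sum.elim_inl, Sum.elim_inr, Pi.add_apply, Finset.sum_apply,
          Pi.smul_apply, smul_eq_mul, Pi.single_apply]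
        rw [Finset.sum_congr rfl (fun j _ => mul_ite (c = j) (max (y j) 0) (1:ℝ) 0),
          Finset.sum_congr rfl (fun j _ => mul_ite (c = j) (max (-(y j)) 0) (-1:ℝ) 0)]
        simp only [mul_one, mul_zero, mul_neg]
        rw [Finset.sum_ite_eq univ c (fun j => max (y j) 0),
          Finset.sum_ite_eq univ c (fun j => -max (-(y j)) 0)]
        simp only [Finset.mem_univ, if_true]
        rcases le_total 0 (y c) with h | h
        · rw [max_eq_left h, max_eq_right (by linarith)]; ring
        · rw [max_eq_right h, max_eq_left (by linarith)]; ring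
    · intro _
      exact fun i => i.elim0
  | succ m IH =>
    obtain ⟨k, v, hv⟩ := IH (fun i => a i.castSucc)
    obtain ⟨k', w, hw⟩ := dd_step v (a (Fin.last m))
    refine ⟨k', w, ?_⟩
    rw [← hw, ← hv]
    ext y
    simp only [Set.mem_inter_iff, Set.mem_setOf_eq]
    constructor
    · intro hy; exact ⟨fun i => hy _, hy _⟩
    · rintro ⟨h1, h2⟩ i
      exact Fin.lastCases h2 h1 i

lemma split3 {k : ℕ} (T : Fin k → ℝ) (Z : Fin k → Prop) [DecidablePred Z] (hT : ∀ s, 0 ≤ T s)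
    (f : Fin k → ℝ) (hf : ∀ s, T s = 0 → ¬ Z s → f s = 0) :
    ∑ s, f s = (∑ s : {s // 0 < T s}, f s.1) + ∑ s : {s // T s = 0 ∧ Z s}, f s.1 := by
  classical
  rw [← Finset.sum_filter_add_sum_filter_not univ (fun s => 0 < T s) f]
  congr 1
  · exact Finset.sum_subtype _ (fun s => by simp) f
  · rw [← Finset.sum_filter_add_sum_filter_not (univ.filter fun s => ¬ 0 < T s) Z f]
    have hz : ∑ s ∈ (univ.filter fun s => ¬ 0 < T s).filter (fun s => ¬ Z s), f s = 0 := by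
      apply Finset.sum_eq_zero
      intro s hs
      simp only [Finset.mem_filter, Finset.mem_univ, true_and] at hs
      exact hf s (le_antisymm (not_lt.mp hs.1) (hT s)) hs.2
    rw [hz, add_zero, Finset.filter_filter]
    apply Finset.sum_subtype
    intro s
    simp only [Finset.mem_filter, Finset.mem_univ, true_and]
    constructor
    · rintro ⟨h1, h2⟩; exact ⟨le_antisymm (not_lt.mp h1) (hT s), h2⟩
    · rintro ⟨h1, h2⟩; exact ⟨by rw [h1]; exact lt_irrefl 0, h2⟩

/-- A closed convex polyhedron: the solution set of a finite system of
non-strict linear inequalities. -/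
def IsPolyhedron {n : ℕ} (P : Set (Fin n → ℝ)) : Prop :=
  ∃ (m : ℕ) (a : Fin m → Fin n → ℝ) (b : Fin m → ℝ),
    P = {v | ∀ i, b i ≤ ∑ j, a i j * v j}

/-- Minkowski–Weyl, constraint direction: every nonempty closed convex polyhedron is
generated by finite sets of rays `R` (with `0 ∉ R`) and points `P₀`. -/
theorem stmt10 {n : ℕ} (P : Set (Fin n → ℝ)) (hP : IsPolyhedron P) (hne : P.Nonempty) :
    ∃ (r p : ℕ) (R : Fin r → Fin n → ℝ) (P₀ : Fin p → Fin n → ℝ),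
      (∀ i, R i ≠ 0) ∧
      P = {x : Fin n → ℝ | ∃ (ρ : Fin r → ℝ) (π : Fin p → ℝ),
        (∀ i, 0 ≤ ρ i) ∧ (∀ j, 0 ≤ π j) ∧ ∑ j, π j = 1 ∧
        x = ∑ i, ρ i • R i + ∑ j, π j • P₀ j} := by
  classical
  obtain ⟨m, a, b, rfl⟩ := hP
  -- homogenized constraint matrix on ℝ^{n+1}
  set A : Fin (m+1) → Fin (n+1) → ℝ :=
    Fin.snoc (fun i => Fin.snoc (a i) (-b i)) (Pi.single (Fin.last n) 1) with hAdef
  obtain ⟨k, v, hv⟩ := cone_fg (m+1) A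
  have hdotrow : ∀ (i : Fin m) (y : Fin (n+1) → ℝ),
      dotp (A i.castSucc) y = (∑ j, a i j * y j.castSucc) + (-b i) * y (Fin.last n) := by
    intro i y
    unfold dotp
    rw [Fin.sum_univ_castSucc]
    simp [hAdef, Fin.snoc_castSucc, Fin.snoc_last]
  have hdotlast : ∀ y : Fin (n+1) → ℝ, dotp (A (Fin.last m)) y = y (Fin.last n) := by
    intro y
    unfold dotp
    simp only [hAdef, Fin.snoc_last, Pi.single_apply]
    rw [Finset.sum_congr rfl (fun j _ => ite_mul (j = Fin.last n) (1:ℝ) 0 (y j))]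
    simp only [one_mul, zero_mul]
    rw [Finset.sum_ite_eq' univ (Fin.last n) y]
    simp
  have hC : ∀ y : Fin (n+1) → ℝ, y ∈ coneOf v ↔
      ((∀ i : Fin m, y (Fin.last n) * b i ≤ ∑ j : Fin n, a i j * y j.castSucc)
        ∧ 0 ≤ y (Fin.last n)) := by
    intro y
    have hy : y ∈ coneOf v ↔ ∀ i, 0 ≤ dotp (A i) y := by rw [← hv]; rfl
    rw [hy]
    constructor
    · intro hy'
      refine ⟨fun i => ?_, ?_⟩
      · have := hy' i.castSucc; rw [hdotrow] at this; linarith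
      · have := hy' (Fin.last m); rw [hdotlast] at this; exact this
    · rintro ⟨h1, h2⟩ i
      refine Fin.lastCases ?_ ?_ i
      · rw [hdotlast]; exact h2
      · intro i; rw [hdotrow]; have := h1 i; linarith
  have ht : ∀ s, 0 ≤ v s (Fin.last n) := fun s => ((hC (v s)).mp (mem_coneOf_self v s)).2
  set r := Fintype.card {s : Fin k // v s (Fin.last n) = 0 ∧ Fin.init (v s) ≠ 0} with hr
  set p := Fintype.card {s : Fin k // 0 < v s (Fin.last n)} with hp
  set e0 : Fin r ≃ {s : Fin k // v s (Fin.last n) = 0 ∧ Fin.init (v s) ≠ 0} :=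
    (Fintype.equivFin _).symm with he0
  set e1 : Fin p ≃ {s : Fin k // 0 < v s (Fin.last n)} :=
    (Fintype.equivFin _).symm with he1
  refine ⟨r, p, fun i => Fin.init (v ↑(e0 i)), fun j => (v ↑(e1 j) (Fin.last n))⁻¹ • Fin.init (v ↑(e1 j)),
    fun i => (e0 i).2.2, ?_⟩
  ext x
  simp only [Set.mem_setOf_eq]
  constructor
  · -- x satisfies the constraints ⇒ representation
    intro hx
    have hxC : Fin.snoc x (1:ℝ) ∈ coneOf v := by
      rw [hC]
      constructor
      · intro i
        simp only [Fin.snoc_last, Fin.snoc_castSucc, one_mul]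
        exact hx i
      · simp
    obtain ⟨lam, hlam, hsum⟩ := hxC
    have hcoord : ∀ c : Fin (n+1), (Fin.snoc x (1:ℝ) : Fin (n+1) → ℝ) c = ∑ s, lam s * v s c := by
      intro c; rw [hsum]; simp [Finset.sum_apply]
    refine ⟨fun i => lam ↑(e0 i), fun j => lam ↑(e1 j) * v ↑(e1 j) (Fin.last n),
      fun i => hlam _, fun j => mul_nonneg (hlam _) (ht _), ?_, ?_⟩
    · -- sum of π is 1
      have h1 : (1:ℝ) = ∑ s, lam s * v s (Fin.last n) := by
        have := hcoord (Fin.last n); rwa [Fin.snoc_last] at this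
      rw [split3 (fun s => v s (Fin.last n)) (fun s => Fin.init (v s) ≠ 0) ht
        (fun s => lam s * v s (Fin.last n)) (fun s h0 _ => by
          have h0' : v s (Fin.last n) = 0 := h0
          show lam s * v s (Fin.last n) = 0
          rw [h0', mul_zero])] at h1
      have h2 : ∑ s : {s : Fin k // v s (Fin.last n) = 0 ∧ Fin.init (v s) ≠ 0},
          lam s.1 * v s.1 (Fin.last n) = 0 := by
        apply Finset.sum_eq_zero; intro s _; rw [s.2.1, mul_zero]
      rw [h2, add_zero] at h1
      rw [← Fintype.sum_equiv e1 (fun j => lam ↑(e1 j) * v ↑(e1 j) (Fin.last n))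
        (fun s => lam s.1 * v s.1 (Fin.last n)) (fun j => rfl)] at h1
      exact h1.symm
    · -- the representation of x
      funext c
      have h1 : x c = ∑ s, lam s * v s c.castSucc := by
        have := hcoord c.castSucc; rwa [Fin.snoc_castSucc] at this
      rw [split3 (fun s => v s (Fin.last n)) (fun s => Fin.init (v s) ≠ 0) ht
        (fun s => lam s * v s c.castSucc)
        (fun s h0 hz => by
          have hz' : Fin.init (v s) = 0 := not_not.mp hz
          have h2 : v s c.castSucc = 0 := congrFun hz' c
          show lam s * v s c.castSucc = 0
          rw [h2, mul_zero])] at h1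
      simp only [Pi.add_apply, Finset.sum_apply, Pi.smul_apply, smul_eq_mul]
      rw [h1]
      have e1sum : ∑ s : {s : Fin k // 0 < v s (Fin.last n)}, lam s.1 * v s.1 c.castSucc
          = ∑ j : Fin p, (lam ↑(e1 j) * v ↑(e1 j) (Fin.last n))
              * ((v ↑(e1 j) (Fin.last n))⁻¹ * Fin.init (v ↑(e1 j)) c) := by
        rw [← Fintype.sum_equiv e1 (fun j => lam ↑(e1 j) * v ↑(e1 j) c.castSucc)
          (fun s => lam s.1 * v s.1 c.castSucc) (fun j => rfl)]
        apply Finset.sum_congr rfl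
        intro j _
        have hne' : v ↑(e1 j) (Fin.last n) ≠ 0 := ne_of_gt (e1 j).2
        have : Fin.init (v ↑(e1 j)) c = v ↑(e1 j) c.castSucc := rfl
        rw [this]
        field_simp
      have e0sum : ∑ s : {s : Fin k // v s (Fin.last n) = 0 ∧ Fin.init (v s) ≠ 0},
          lam s.1 * v s.1 c.castSucc
          = ∑ i : Fin r, lam ↑(e0 i) * Fin.init (v ↑(e0 i)) c := by
        rw [← Fintype.sum_equiv e0 (fun i => lam ↑(e0 i) * v ↑(e0 i) c.castSucc)
          (fun s => lam s.1 * v s.1 c.castSucc) (fun i => rfl)]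
        exact Finset.sum_congr rfl (fun i _ => rfl)
      rw [e1sum, e0sum, add_comm]
  · -- representation ⇒ x satisfies the constraints
    rintro ⟨ρ, π, hρ, hπ, hπ1, rfl⟩
    set x := ∑ i, ρ i • (fun i => Fin.init (v ↑(e0 i))) i
      + ∑ j, π j • (fun j => (v ↑(e1 j) (Fin.last n))⁻¹ • Fin.init (v ↑(e1 j))) j with hxdef
    have hv0 : ∀ i : Fin r, Fin.snoc (Fin.init (v ↑(e0 i))) (0:ℝ) = v ↑(e0 i) := by
      intro i
      have h0 : v ↑(e0 i) (Fin.last n) = 0 := (e0 i).2.1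
      have hsi := Fin.snoc_init_self (v ↑(e0 i))
      rw [h0] at hsi
      exact hsi
    have hv1 : ∀ j : Fin p, (Fin.snoc ((v ↑(e1 j) (Fin.last n))⁻¹ • Fin.init (v ↑(e1 j))) (1:ℝ) : Fin (n+1) → ℝ)
        = (v ↑(e1 j) (Fin.last n))⁻¹ • v ↑(e1 j) := by
      intro j
      have hts : 0 < v ↑(e1 j) (Fin.last n) := (e1 j).2
      funext c
      refine Fin.lastCases ?_ ?_ c
      · simp only [Fin.snoc_last, Pi.smul_apply, smul_eq_mul]
        rw [inv_mul_cancel₀ (ne_of_gt hts)]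
      · intro c'
        simp only [Fin.snoc_castSucc, Pi.smul_apply, smul_eq_mul]
        rfl
    have hsnoc : (Fin.snoc x (1:ℝ) : Fin (n+1) → ℝ)
        = ∑ i : Fin r, ρ i • (Fin.snoc (Fin.init (v ↑(e0 i))) (0:ℝ) : Fin (n+1) → ℝ)
          + ∑ j : Fin p, π j • (Fin.snoc ((v ↑(e1 j) (Fin.last n))⁻¹ • Fin.init (v ↑(e1 j))) (1:ℝ) : Fin (n+1) → ℝ) := by
      funext c
      refine Fin.lastCases ?_ ?_ c
      · simp only [Fin.snoc_last, Pi.add_apply, Finset.sum_apply, Pi.smul_apply, smul_eq_mul]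
        simp [hπ1]
      · intro c'
        simp only [Fin.snoc_castSucc, Pi.add_apply, Finset.sum_apply, Pi.smul_apply,
          smul_eq_mul, hxdef]
        try simp [Finset.sum_apply]
    have hxC : Fin.snoc x (1:ℝ) ∈ coneOf v := by
      rw [hsnoc]
      apply add_mem_coneOf
      · apply sum_smul_mem_coneOf hρ
        intro i
        rw [hv0 i]
        exact mem_coneOf_self v _
      · apply sum_smul_mem_coneOf hπ
        intro j
        rw [hv1 j]
        exact smul_mem_coneOf (inv_nonneg.mpr (ht _)) (mem_coneOf_self v _)
    intro i
    have := ((hC _).mp hxC).1 i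
    simp only [Fin.snoc_last, Fin.snoc_castSucc, one_mul] at this
    exact this
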